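/- arXiv:2412.19232 — 2 statements merged into one kernel-verified Lean document; each statement's English description precedes it below -/
import Mathlib

section
/- Let n ≥ 1, let d be a natural number with 1 ≤ d ≤ 2^{n-1}, let l = ⌈log₂ d⌉ and D = 2^l. Then for p = D - d, the bitwise XOR of the binary representations of p + d and p equals the string x whose k-th bit (LSB-first) is ⌈d / 2^{k-1}⌉ mod 2 for k ≤ l+1 and 0 for k > l+1, provided d is not a power of 2. -/
/-- The `k`-th bit (0-indexed, LSB-first) of a natural number. -/
def bitn (a k : ℕ) : ℕ := a / 2 ^ k % 2

lemma bitn_eq_testBit (a k : ℕ) : bitn a k = (a.testBit k).toNat := by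
  rw [Nat.testBit_eq_decide_div_mod_eq, bitn]
  rcases Nat.mod_two_eq_zero_or_one (a / 2 ^ k) with h | h <;> simp [h]

/-- Let `1 ≤ d ≤ 2^(n-1)` with `d` not a power of two, `l = ⌈log₂ d⌉`, `D = 2^l` and
`p = D - d`.  Then the bitwise XOR of the binary representations of `p + d` and `p` is the
string `x` whose `k`-th bit (LSB-first, `1 ≤ k ≤ n`) is `⌈d / 2^(k-1)⌉ mod 2` for
`k ≤ l + 1` and `0` for `k > l + 1`. -/
theorem xor_of_pow_sub_band (n d : ℕ) (hn : 1 ≤ n) (hd1 : 1 ≤ d) (hd2 : d ≤ 2 ^ (n - 1))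
    (hnp : ∀ t : ℕ, d ≠ 2 ^ t) :
    ∀ k, 1 ≤ k → k ≤ n →
      bitn ((((2 ^ Nat.clog 2 d - d) + d)) ^^^ (2 ^ Nat.clog 2 d - d)) (k - 1) =
        if k ≤ Nat.clog 2 d + 1 then (d + 2 ^ (k - 1) - 1) / 2 ^ (k - 1) % 2 else 0 := by
  intro k hk1 hkn
  set l := Nat.clog 2 d with hl
  have h2d : 2 ≤ d := by
    have h0 := hnp 0
    simp at h0
    omega
  have hdle : d ≤ 2 ^ l := Nat.le_pow_clog one_lt_two d
  have hdlt : d < 2 ^ l := lt_of_le_of_ne hdle (hnp l)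
  have hpd : (2 ^ l - d) + d = 2 ^ l := Nat.sub_add_cancel hdle
  rw [hpd, bitn_eq_testBit, Nat.testBit_xor, Nat.testBit_two_pow]
  set j := k - 1 with hj
  set p := 2 ^ l - d with hp
  have hjpos : (0:ℕ) < 2 ^ j := Nat.pow_pos (by norm_num)
  rcases lt_trichotomy j l with hc | hc | hc
  · -- low bits: bit j of p equals ceiling bit
    have hne : l ≠ j := by omega
    rw [decide_eq_false hne, Bool.false_xor, ← bitn_eq_testBit]
    have hif : k ≤ l + 1 := by omega
    rw [if_pos hif]
    show p / 2 ^ j % 2 = _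
    set c := (d + 2 ^ j - 1) / 2 ^ j with hcdef
    have h1 : c * 2 ^ j ≤ d + 2 ^ j - 1 := Nat.div_mul_le_self _ _
    have h2 : d + 2 ^ j - 1 < (c + 1) * 2 ^ j := by
      have hm := Nat.mod_lt (d + 2 ^ j - 1) hjpos
      have hdm := Nat.div_add_mod (d + 2 ^ j - 1) (2 ^ j)
      rw [← hcdef, mul_comm] at hdm
      have := Nat.add_one_mul c (2 ^ j)
      omega
    have hdc : d ≤ c * 2 ^ j := by
      have := Nat.add_one_mul c (2 ^ j)
      omega
    have hpow : 2 ^ (l - j) * 2 ^ j = 2 ^ l := by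
      rw [← pow_add]; congr 1; omega
    have hcle : c * 2 ^ j ≤ 2 ^ l := by
      -- c * 2^j < 2^l + 2^j, both multiples of 2^j
      have hlt : c * 2 ^ j < 2 ^ l + 2 ^ j := by omega
      have : c ≤ 2 ^ (l - j) := by
        by_contra h
        push_neg at h
        have : (2 ^ (l - j) + 1) * 2 ^ j ≤ c * 2 ^ j :=
          Nat.mul_le_mul_right _ h
        have := Nat.add_one_mul (2 ^ (l - j)) (2 ^ j)
        omega
      calc c * 2 ^ j ≤ 2 ^ (l - j) * 2 ^ j := Nat.mul_le_mul_right _ this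
        _ = 2 ^ l := hpow
    have hsub : (2 ^ (l - j) - c) * 2 ^ j = 2 ^ l - c * 2 ^ j := by
      rw [Nat.sub_mul, hpow]
    have hdiv : p / 2 ^ j = 2 ^ (l - j) - c := by
      apply Nat.div_eq_of_lt_le
      · rw [hsub]; omega
      · have := Nat.add_one_mul (2 ^ (l - j) - c) (2 ^ j)
        rw [this, hsub]
        omega
    rw [hdiv]
    have heven : 2 ^ (l - j) % 2 = 0 := by
      have : 2 ^ (l - j) = 2 * 2 ^ (l - j - 1) := by
        rw [← pow_succ']; congr 1; omega
      omega
    have hcle' : c ≤ 2 ^ (l - j) := by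
      by_contra h
      push_neg at h
      have : (2 ^ (l - j) + 1) * 2 ^ j ≤ c * 2 ^ j := Nat.mul_le_mul_right _ h
      have := Nat.add_one_mul (2 ^ (l - j)) (2 ^ j)
      omega
    omega
  · -- j = l : bit is 1, ceiling is 1
    have hplt : p < 2 ^ j := by rw [hc]; omega
    rw [decide_eq_true hc.symm, Nat.testBit_lt_two_pow hplt, if_pos (by omega)]
    have : (d + 2 ^ j - 1) / 2 ^ j = 1 := by
      apply Nat.div_eq_of_lt_le <;> rw [hc] <;> omega
    rw [this]
    rfl
  · -- high bits : everything is 0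
    have hne : l ≠ j := by omega
    have hplt : p < 2 ^ j := by
      have : 2 ^ l ≤ 2 ^ j := Nat.pow_le_pow_right (by norm_num) (by omega)
      omega
    rw [decide_eq_false hne, Nat.testBit_lt_two_pow hplt, if_neg (by omega)]
    rfl
end

section
/- For natural numbers d ≥ 1 and n with d ≤ 2^{n-1}, the quantity 1 + ∑_{k=1}^{d} (n − ⌈log₂ k⌉) equals 2^{L(d)} + (n − L(d))·d, where L(d) = ⌊log₂ d⌋ + 1 is the number of bits in the binary representation of d. -/
/-- For `d ≥ 1`, `n ≥ 1` with `d ≤ 2^(n-1)`, the number of sets in the Pauli decomposition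
of a `d`-band `2^n × 2^n` matrix satisfies
`1 + ∑_{k=1}^{d} (n − ⌈log₂ k⌉) = 2^{L(d)} + (n − L(d))·d`,
where `L(d) = ⌊log₂ d⌋ + 1` is the binary length of `d`. -/
theorem number_of_sets_closed_form (n d : ℕ) (hn : 1 ≤ n) (hd : 1 ≤ d)
    (hdn : d ≤ 2 ^ (n - 1)) :
    1 + ∑ k ∈ Finset.Icc 1 d, (n - Nat.clog 2 k) =
      2 ^ (Nat.log 2 d + 1) + (n - (Nat.log 2 d + 1)) * d := by
  induction d, hd using Nat.le_induction with
  | base =>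
    simp [Nat.log_one_right, Nat.clog_one_right]
    omega
  | succ d hd1 ih =>
    have ih' := ih (by
      calc d ≤ d + 1 := Nat.le_succ d
        _ ≤ 2 ^ (n - 1) := hdn)
    set L := Nat.log 2 d with hLdef
    have hL : 2 ^ L ≤ d := Nat.pow_log_le_self 2 (by omega)
    have hlt : d < 2 ^ (L + 1) := Nat.lt_pow_succ_log_self one_lt_two d
    have hc : Nat.clog 2 (d + 1) = L + 1 := by
      apply le_antisymm
      · exact (Nat.clog_le_iff_le_pow one_lt_two).mpr hlt
      · rw [Nat.succ_le_iff, Nat.lt_clog_iff_pow_lt one_lt_two]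
        omega
    rw [Finset.sum_Icc_succ_top (by omega : 1 ≤ d + 1), ← add_assoc, ih', hc]
    by_cases hpow : d + 1 = 2 ^ (L + 1)
    · have hL' : Nat.log 2 (d + 1) = L + 1 := by
        rw [hpow, Nat.log_pow one_lt_two]
      have hn2 : L + 2 ≤ n := by
        have h1 : 2 ^ (L + 1) ≤ 2 ^ (n - 1) := by rw [← hpow]; exact hdn
        have h2 : L + 1 ≤ n - 1 := (Nat.pow_le_pow_iff_right one_lt_two).mp h1
        omega
      rw [hL']
      obtain ⟨a, ha⟩ : ∃ a, n - (L + 1) = a + 1 := ⟨n - (L + 2), by omega⟩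
      have ha2 : n - (L + 1 + 1) = a := by omega
      rw [ha, ha2, show (2 : ℕ) ^ (L + 1 + 1) = 2 * 2 ^ (L + 1) by ring, ← hpow]
      ring
    · have hL' : Nat.log 2 (d + 1) = L := by
        apply le_antisymm
        · have : d + 1 < 2 ^ (L + 1) := by omega
          have := Nat.log_lt_of_lt_pow (by omega : d + 1 ≠ 0) this
          omega
        · exact Nat.log_mono_right (Nat.le_succ d)
      rw [hL']
      ring
end
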